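/- Let c > 0 and k ≥ 1. Then Σ over all strictly increasing multi-indices l ∈ ℕ^k with l ≠ (1,2,...,k) of exp(−c Σ_{i=1}^k (l_i² − i²)) ≤ (1 − e^{−c})^{−k} e^{−ck}. -/

import Mathlib

set_option maxHeartbeats 1000000


open Finset Real

lemma aux_sm {k : ℕ} {l : Fin k → ℕ} (hl : StrictMono l) :
    ∀ b (hb : b < k) a (ha : a < k), a ≤ b → l ⟨a, ha⟩ + (b - a) ≤ l ⟨b, hb⟩ := by
  intro b
  induction b with
  | zero =>
    intro hb a ha hab
    have : a = 0 := Nat.le_zero.mp hab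
    subst this; simp
  | succ n ih =>
    intro hb a ha hab
    rcases Nat.eq_or_lt_of_le hab with h | h
    · subst h; simp
    · have h1 : a ≤ n := Nat.lt_succ_iff.mp h
      have h2 := ih (Nat.lt_of_succ_lt hb) a ha h1
      have h3 : l ⟨n, Nat.lt_of_succ_lt hb⟩ < l ⟨n + 1, hb⟩ := hl (by simp [Fin.lt_def])
      omega

lemma aux_ge {k : ℕ} {l : Fin k → ℕ} (hl : StrictMono l) (h1 : ∀ i, 1 ≤ l i) (i : Fin k) :
    (i : ℕ) + 1 ≤ l i := by
  have h0 : 0 < k := i.pos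
  have := aux_sm hl i.val i.2 0 h0 (Nat.zero_le _)
  have h2 := h1 ⟨0, h0⟩
  simp only [Fin.eta] at this
  omega

lemma aux_hasSum (k : ℕ) {r : ℝ} (h0 : 0 ≤ r) (h1 : r < 1) :
    HasSum (fun m : Fin k → ℕ => ∏ i, r ^ (m i)) (((1 - r)⁻¹) ^ k) := by
  induction k with
  | zero =>
    have := hasSum_fintype (fun m : Fin 0 → ℕ => ∏ i, r ^ (m i))
    simpa using this
  | succ n ih =>
    have hg : HasSum (fun n : ℕ => r ^ n) (1 - r)⁻¹ := hasSum_geometric_of_lt_one h0 h1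
    have hsg : Summable fun n : ℕ => r ^ n := hg.summable
    have hsi : Summable fun m : Fin n → ℕ => ∏ i, r ^ (m i) := ih.summable
    have hsum : Summable fun x : ℕ × (Fin n → ℕ) => r ^ x.1 * ∏ i, r ^ (x.2 i) := by
      apply Summable.mul_of_nonneg hsg hsi
      · exact fun x => pow_nonneg h0 _
      · exact fun x => Finset.prod_nonneg fun i _ => pow_nonneg h0 _
    have H := hg.mul ih hsum
    have := ((Fin.consEquiv (fun _ : Fin (n + 1) => ℕ)).symm.hasSum_iff
      (f := fun x : ℕ × (Fin n → ℕ) => r ^ x.1 * ∏ i, r ^ (x.2 i))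
      (a := (1 - r)⁻¹ * ((1 - r)⁻¹) ^ n)).mpr H
    have heq : (fun m : Fin (n + 1) → ℕ => ∏ i, r ^ (m i)) =
        (fun x : ℕ × (Fin n → ℕ) => r ^ x.1 * ∏ i, r ^ (x.2 i)) ∘ (Fin.consEquiv (fun _ : Fin (n + 1) => ℕ)).symm := by
      funext m
      simp [Fin.consEquiv, Fin.prod_univ_succ, Fin.tail]
    rw [heq]
    convert this using 1
    ring

/-- Geometric-series bound on the sum over strictly increasing multi-indices `l ≠ id`
of `exp(−c Σ_i (l_i² − i²))`. -/
theorem sum_exp_bound (k : ℕ) (hk : 1 ≤ k) (c : ℝ) (hc : 0 < c) :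
    ∑' l : {l : Fin k → ℕ // StrictMono l ∧ (∀ i, 1 ≤ l i) ∧ l ≠ fun i : Fin k => (i : ℕ) + 1},
        Real.exp (-c * ∑ i : Fin k, ((l.1 i : ℝ) ^ 2 - (((i : ℕ) + 1 : ℝ)) ^ 2)) ≤
      ((1 - Real.exp (-c))⁻¹) ^ k * Real.exp (-c * k) := by
  set r : ℝ := Real.exp (-c) with hr
  have hr0 : 0 ≤ r := (Real.exp_pos _).le
  have hr1 : r < 1 := by
    rw [hr, Real.exp_lt_one_iff]; linarith
  set T := {l : Fin k → ℕ // StrictMono l ∧ (∀ i, 1 ≤ l i) ∧ l ≠ fun i : Fin k => (i : ℕ) + 1}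
  set F : T → ℝ := fun l =>
    Real.exp (-c * ∑ i : Fin k, ((l.1 i : ℝ) ^ 2 - (((i : ℕ) + 1 : ℝ)) ^ 2)) with hF
  set G : (Fin k → ℕ) → ℝ := fun m => Real.exp (-c * k) * ∏ i, r ^ (m i) with hG
  have hGsum : HasSum G (Real.exp (-c * k) * ((1 - r)⁻¹) ^ k) :=
    (aux_hasSum k hr0 hr1).mul_left _
  -- injection
  set ι : T → (Fin k → ℕ) := fun l i => l.1 i - ((i : ℕ) + 1) with hι
  have hval : ∀ (l : T) (i : Fin k), l.1 i = ι l i + ((i : ℕ) + 1) := by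
    intro l i
    have := aux_ge l.2.1 l.2.2.1 i
    simp only [hι]
    omega
  have hinj : Function.Injective ι := by
    intro a b hab
    ext i
    rw [hval a i, hval b i, hab]
  -- pointwise bound
  have hFG : ∀ l : T, F l ≤ G (ι l) := by
    intro l
    set last : Fin k := ⟨k - 1, by omega⟩ with hlast
    have hlge : k + 1 ≤ l.1 last := by
      by_contra hcon
      push_neg at hcon
      have h1 : (last : ℕ) + 1 ≤ l.1 last := aux_ge l.2.1 l.2.2.1 last
      have hlastval : (last : ℕ) = k - 1 := rfl
      have hlk : l.1 last = k := by omega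
      apply l.2.2.2
      funext i
      have h2 := aux_sm l.2.1 (k - 1) (by omega) i.val i.2 (by omega)
      simp only [Fin.eta] at h2
      have h3 : (i : ℕ) + 1 ≤ l.1 i := aux_ge l.2.1 l.2.2.1 i
      have h4 : l.1 ⟨k - 1, by omega⟩ = k := hlk
      omega
    -- key inequality on sums
    have key : (k : ℝ) + ∑ i : Fin k, ((ι l i : ℕ) : ℝ) ≤
        ∑ i : Fin k, ((l.1 i : ℝ) ^ 2 - (((i : ℕ) + 1 : ℝ)) ^ 2) := by
      have hmem : last ∈ Finset.univ (α := Fin k) := Finset.mem_univ _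
      rw [← Finset.add_sum_erase _ _ hmem, ← Finset.add_sum_erase _ (fun i : Fin k => ((l.1 i : ℝ) ^ 2 - (((i : ℕ) + 1 : ℝ)) ^ 2)) hmem]
      have hterm : ∀ i ∈ Finset.univ.erase last,
          ((ι l i : ℕ) : ℝ) ≤ (l.1 i : ℝ) ^ 2 - (((i : ℕ) + 1 : ℝ)) ^ 2 := by
        intro i _
        have h3 : (i : ℕ) + 1 ≤ l.1 i := aux_ge l.2.1 l.2.2.1 i
        have hm : ((ι l i : ℕ) : ℝ) = (l.1 i : ℝ) - ((i : ℕ) + 1 : ℝ) := by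
          simp only [hι]
          push_cast [Nat.cast_sub h3]
          ring
        rw [hm]
        have h4 : ((i : ℕ) + 1 : ℝ) ≥ 1 := by linarith [Nat.cast_nonneg (α := ℝ) (i : ℕ)]
        have h5 : ((i : ℕ) + 1 : ℝ) ≤ (l.1 i : ℝ) := by exact_mod_cast h3
        nlinarith [mul_nonneg (sub_nonneg.mpr h5) (by linarith : (0:ℝ) ≤ (l.1 i : ℝ) + ((i : ℕ) + 1 : ℝ) - 1)]
      have hlastterm : ((ι l last : ℕ) : ℝ) + k ≤
          (l.1 last : ℝ) ^ 2 - (((last : ℕ) + 1 : ℝ)) ^ 2 := by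
        have h3 : (last : ℕ) + 1 ≤ l.1 last := aux_ge l.2.1 l.2.2.1 last
        have hm : ((ι l last : ℕ) : ℝ) = (l.1 last : ℝ) - ((last : ℕ) + 1 : ℝ) := by
          simp only [hι]
          push_cast [Nat.cast_sub h3]
          ring
        rw [hm]
        have hlastval : ((last : ℕ) : ℝ) = (k : ℝ) - 1 := by
          have : (last : ℕ) = k - 1 := rfl
          rw [this]
          push_cast [Nat.cast_sub hk]
          ring
        rw [hlastval]
        have h5 : (k : ℝ) + 1 ≤ (l.1 last : ℝ) := by exact_mod_cast hlge
        have hk1 : (1 : ℝ) ≤ (k : ℝ) := by exact_mod_cast hk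
        nlinarith [mul_nonneg (by linarith : (0:ℝ) ≤ (l.1 last : ℝ) - (k:ℝ) - 1) (by linarith : (0:ℝ) ≤ (l.1 last : ℝ) + (k:ℝ))]
      have hsum2 : ∑ i ∈ Finset.univ.erase last, ((ι l i : ℕ) : ℝ) ≤
          ∑ i ∈ Finset.univ.erase last, ((l.1 i : ℝ) ^ 2 - (((i : ℕ) + 1 : ℝ)) ^ 2) :=
        Finset.sum_le_sum hterm
      linarith
    -- conclude
    have hexp : F l ≤ Real.exp (-c * ((k : ℝ) + ∑ i : Fin k, ((ι l i : ℕ) : ℝ))) := by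
      apply Real.exp_le_exp.mpr
      have hc' : (0 : ℝ) ≤ c := hc.le
      nlinarith [key]
    refine hexp.trans_eq ?_
    rw [hG]
    rw [mul_add, Real.exp_add]
    congr 1
    rw [Finset.mul_sum, Real.exp_sum]
    apply Finset.prod_congr rfl
    intro i _
    rw [hr, ← Real.exp_nat_mul]
    congr 1
    ring
  have hFnonneg : ∀ l, 0 ≤ F l := fun l => (Real.exp_pos _).le
  have hGnonneg : ∀ m, 0 ≤ G m :=
    fun m => mul_nonneg (Real.exp_pos _).le (Finset.prod_nonneg fun i _ => pow_nonneg hr0 _)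
  have hFsum : Summable F := by
    apply Summable.of_nonneg_of_le hFnonneg hFG
    exact hGsum.summable.comp_injective hinj
  calc ∑' l : T, F l ≤ ∑' m : Fin k → ℕ, G m :=
        hFsum.tsum_le_tsum_of_inj ι hinj (fun m _ => hGnonneg m) hFG hGsum.summable
    _ = Real.exp (-c * k) * ((1 - r)⁻¹) ^ k := hGsum.tsum_eq
    _ = ((1 - Real.exp (-c))⁻¹) ^ k * Real.exp (-c * k) := by rw [hr]; ring
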